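/- Let 1<p<∞. There exist positive constants c and C (depending only on p) such that for every positive integer n, c · n ≤ ‖Δ_n‖_{S_p} ≤ C · n, where Δ_n is the n×n Hankel matrix with entries (Δ_n)_{jk} = 1 if j+k < n and (Δ_n)_{jk} = 0 if j+k ≥ n (indices 0 ≤ j,k ≤ n−1). -/

import Mathlib

open scoped BigOperators

/-- The singular values of a square complex matrix: square roots of the
eigenvalues of `Aᴴ * A` (in the order produced by the spectral theorem). -/
noncomputable def singVals {ι : Type*} [Fintype ι] [DecidableEq ι]
    (A : Matrix ι ι ℂ) : ι → ℝ :=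
  fun i => Real.sqrt ((Matrix.isHermitian_conjTranspose_mul_self A).eigenvalues i)

/-- The Schatten–von Neumann quasinorm `‖A‖_{S_p} = (∑ s_j(A)^p)^{1/p}`. -/
noncomputable def schattenNorm (p : ℝ) {ι : Type*} [Fintype ι] [DecidableEq ι]
    (A : Matrix ι ι ℂ) : ℝ :=
  (∑ i, singVals A i ^ p) ^ (1 / p)

/-- `Δ_n`: the `n × n` Hankel matrix with `(Δ_n)_{jk} = 1` iff `j + k < n`. -/
def deltaMat (n : ℕ) : Matrix (Fin n) (Fin n) ℂ :=
  Matrix.of fun j k => if (j : ℕ) + (k : ℕ) < n then 1 else 0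

set_option linter.unusedSectionVars false
set_option linter.unusedVariables false
set_option maxHeartbeats 1000000

open Finset Module Matrix

section Abstract
variable {E : Type*} [NormedAddCommGroup E] [InnerProductSpace ℂ E] [FiniteDimensional ℂ E]
variable {ι : Type*} [Fintype ι]

local notation "⟪" x ", " y "⟫" => @inner ℂ _ _ x y

lemma obParseval (b : OrthonormalBasis ι ℂ E) (x : E) :
    ∑ i, ‖⟪b i, x⟫‖ ^ 2 = ‖x‖ ^ 2 := by
  have h1 : ‖x‖ = ‖b.repr x‖ := (b.repr.norm_map x).symm
  rw [h1, EuclideanSpace.norm_eq, Real.sq_sqrt (by positivity)]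
  simp [b.repr_apply_apply]

lemma sum_norm_map_le (e : OrthonormalBasis ι ℂ E) {κ : Type*} [Fintype κ] {v : κ → E}
    (hv : Orthonormal ℂ v) (M : E →ₗ[ℂ] E) :
    ∑ k, ‖M (v k)‖ ^ 2 ≤ ∑ i, ‖M (e i)‖ ^ 2 := by
  calc ∑ k, ‖M (v k)‖ ^ 2 = ∑ k, ∑ i, ‖⟪e i, M (v k)⟫‖ ^ 2 :=
        Finset.sum_congr rfl fun k _ => (obParseval e _).symm
    _ = ∑ i, ∑ k, ‖⟪v k, (LinearMap.adjoint M) (e i)⟫‖ ^ 2 := by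
        rw [Finset.sum_comm]
        refine Finset.sum_congr rfl fun i _ => Finset.sum_congr rfl fun k _ => ?_
        rw [← LinearMap.adjoint_inner_left, norm_inner_symm]
    _ ≤ ∑ i, ‖(LinearMap.adjoint M) (e i)‖ ^ 2 := by
        exact Finset.sum_le_sum fun i _ => hv.sum_inner_products_le _
    _ = ∑ i, ∑ j, ‖⟪M (e j), e i⟫‖ ^ 2 := by
        refine Finset.sum_congr rfl fun i _ => ?_
        rw [← obParseval e ((LinearMap.adjoint M) (e i))]
        refine Finset.sum_congr rfl fun j _ => ?_
        rw [LinearMap.adjoint_inner_right]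
    _ = ∑ j, ‖M (e j)‖ ^ 2 := by
        rw [Finset.sum_comm]
        refine Finset.sum_congr rfl fun j _ => ?_
        rw [← obParseval e (M (e j))]
        exact Finset.sum_congr rfl fun i _ => by rw [norm_inner_symm]

lemma quad_form_eq (b : OrthonormalBasis ι ℂ E) (f : E →ₗ[ℂ] E) (μ : ι → ℝ)
    (hf : ∀ i, (LinearMap.adjoint f) (f (b i)) = (μ i : ℂ) • b i) (v : E) :
    ‖f v‖ ^ 2 = ∑ i, μ i * ‖⟪b i, v⟫‖ ^ 2 := by
  have h1 : (LinearMap.adjoint f) (f v) = ∑ i, (b.repr v i * (μ i : ℂ)) • b i := by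
    conv_lhs => rw [← b.sum_repr v]
    rw [_root_.map_sum, _root_.map_sum]
    refine Finset.sum_congr rfl fun i _ => ?_
    rw [_root_.map_smul, _root_.map_smul, hf i, smul_smul]
  have h2 : (⟪f v, f v⟫ : ℂ) = ((∑ i, μ i * ‖⟪b i, v⟫‖ ^ 2 : ℝ) : ℂ) := by
    rw [← LinearMap.adjoint_inner_right, h1, inner_sum]
    push_cast
    refine Finset.sum_congr rfl fun i _ => ?_
    rw [inner_smul_right, b.repr_apply_apply, ← inner_conj_symm v (b i)]
    have : (⟪b i, v⟫ : ℂ) * (μ i : ℂ) * (starRingEnd ℂ) ⟪b i, v⟫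
        = (μ i : ℂ) * ((⟪b i, v⟫ : ℂ) * (starRingEnd ℂ) ⟪b i, v⟫) := by ring
    rw [this, Complex.mul_conj, Complex.normSq_eq_norm_sq]
    push_cast
    ring
  calc ‖f v‖ ^ 2 = RCLike.re (⟪f v, f v⟫ : ℂ) := (@inner_self_eq_norm_sq ℂ _ _ _ _ _).symm
    _ = ∑ i, μ i * ‖⟪b i, v⟫‖ ^ 2 := by rw [h2]; simp [RCLike.re_to_complex, ← Complex.ofReal_pow]

lemma mu_eq_norm_sq (b : OrthonormalBasis ι ℂ E) (f : E →ₗ[ℂ] E) (μ : ι → ℝ)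
    (hf : ∀ i, (LinearMap.adjoint f) (f (b i)) = (μ i : ℂ) • b i) (i : ι) :
    μ i = ‖f (b i)‖ ^ 2 := by
  classical
  rw [quad_form_eq b f μ hf (b i), Finset.sum_eq_single i]
  · have hbi : (⟪b i, b i⟫ : ℂ) = 1 := by
      rw [@inner_self_eq_norm_sq_to_K ℂ, b.orthonormal.1 i]
      norm_num
    rw [hbi]
    simp
  · intro j _ hj
    rw [b.orthonormal.2 hj]
    simp
  · simp

lemma span_lower (b : OrthonormalBasis ι ℂ E) (f : E →ₗ[ℂ] E) (μ : ι → ℝ)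
    (hf : ∀ i, (LinearMap.adjoint f) (f (b i)) = (μ i : ℂ) • b i) (S : Finset ι)
    {t : ℝ} (ht : 0 ≤ t) (hS : ∀ i ∈ S, t ^ 2 ≤ μ i) :
    ∀ v ∈ Submodule.span ℂ (b '' (S : Set ι)), t * ‖v‖ ≤ ‖f v‖ := by
  intro v hv
  have hc0 : ∀ j, j ∉ S → (⟪b j, v⟫ : ℂ) = 0 := by
    intro j hj
    induction hv using Submodule.span_induction with
    | mem x hx =>
      obtain ⟨i, hi, rfl⟩ := hx
      exact b.orthonormal.2 (fun h => hj (h ▸ hi))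
    | zero => simp
    | add x y _ _ hx hy => rw [inner_add_right, hx, hy, add_zero]
    | smul a x _ hx => rw [inner_smul_right, hx, mul_zero]
  have key : t ^ 2 * ‖v‖ ^ 2 ≤ ‖f v‖ ^ 2 := by
    rw [quad_form_eq b f μ hf v, ← obParseval b v, Finset.mul_sum]
    refine Finset.sum_le_sum fun i _ => ?_
    by_cases hi : i ∈ S
    · exact mul_le_mul_of_nonneg_right (hS i hi) (by positivity)
    · simp [hc0 i hi]
  have h1 : (t * ‖v‖) ^ 2 ≤ ‖f v‖ ^ 2 := by rw [mul_pow]; exact key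
  have := Real.sqrt_le_sqrt h1
  rwa [Real.sqrt_sq (by positivity), Real.sqrt_sq (norm_nonneg _)] at this

lemma exists_big (b : OrthonormalBasis ι ℂ E) (f : E →ₗ[ℂ] E) (μ : ι → ℝ)
    (hf : ∀ i, (LinearMap.adjoint f) (f (b i)) = (μ i : ℂ) • b i) [Nonempty ι] (v : E) :
    ∃ i, ‖f v‖ ^ 2 ≤ μ i * ‖v‖ ^ 2 := by
  obtain ⟨i0, -, hi0⟩ := Finset.exists_max_image Finset.univ μ ⟨Classical.arbitrary ι, Finset.mem_univ _⟩
  refine ⟨i0, ?_⟩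
  rw [quad_form_eq b f μ hf v, ← obParseval b v, Finset.mul_sum]
  exact Finset.sum_le_sum fun i _ =>
    mul_le_mul_of_nonneg_right (hi0 i (Finset.mem_univ i)) (by positivity)

lemma count_lemma (e : OrthonormalBasis ι ℂ E) (f g : E →ₗ[ℂ] E) {t : ℝ} (ht : 0 < t)
    (W : Submodule ℂ E) (hW : ∀ v ∈ W, t * ‖v‖ ≤ ‖f v‖) (r : ℕ)
    (hr : finrank ℂ (LinearMap.range g) ≤ r) :
    (finrank ℂ W : ℝ) ≤ r + (∑ i, ‖(f - g) (e i)‖ ^ 2) / t ^ 2 := by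
  set K := LinearMap.ker g with hK
  set d := finrank ℂ ↥(W ⊓ K) with hd
  let w := stdOrthonormalBasis ℂ ↥(W ⊓ K)
  have hortho : Orthonormal ℂ (fun j : Fin d => ((w j : E))) := by
    constructor
    · intro j; exact w.orthonormal.1 j
    · intro i j hij; simpa [Submodule.coe_inner] using w.orthonormal.2 hij
  have h1 : ∀ j : Fin d, t ≤ ‖(f - g) ((w j : E))‖ := by
    intro j
    have hmem := (w j).2
    have hgz : g ((w j : E)) = 0 := (LinearMap.mem_ker).1 (Submodule.mem_inf.1 hmem).2
    have : (f - g) ((w j : E)) = f ((w j : E)) := by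
      simp [LinearMap.sub_apply, hgz]
    rw [this]
    have := hW _ (Submodule.mem_inf.1 hmem).1
    have hn : ‖(w j : E)‖ = 1 := by exact w.orthonormal.1 j
    simpa [hn] using this
  have h2 : (d : ℝ) * t ^ 2 ≤ ∑ i, ‖(f - g) (e i)‖ ^ 2 := by
    calc (d : ℝ) * t ^ 2 = ∑ _j : Fin d, t ^ 2 := by simp [mul_comm]
      _ ≤ ∑ j : Fin d, ‖(f - g) ((w j : E))‖ ^ 2 :=
          Finset.sum_le_sum fun j _ => pow_le_pow_left₀ ht.le (h1 j) 2
      _ ≤ ∑ i, ‖(f - g) (e i)‖ ^ 2 := sum_norm_map_le e hortho (f - g)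
  have h3 : finrank ℂ W ≤ r + d := by
    have e1 := Submodule.finrank_sup_add_finrank_inf_eq W K
    have e2 := LinearMap.finrank_range_add_finrank_ker g
    rw [← hK] at e2
    have e3 : finrank ℂ ↥(W ⊔ K) ≤ finrank ℂ E := Submodule.finrank_le _
    omega
  have h4 : (d : ℝ) ≤ (∑ i, ‖(f - g) (e i)‖ ^ 2) / t ^ 2 := by
    rw [le_div_iff₀ (by positivity)]
    exact h2
  calc (finrank ℂ W : ℝ) ≤ (r : ℝ) + (d : ℝ) := by exact_mod_cast h3
    _ ≤ r + (∑ i, ‖(f - g) (e i)‖ ^ 2) / t ^ 2 := by linarith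

end Abstract

section MatrixLayer
variable {n : ℕ}

lemma enorm_sq (x : EuclideanSpace ℂ (Fin n)) : ‖x‖ ^ 2 = ∑ j, ‖x j‖ ^ 2 := by
  rw [EuclideanSpace.norm_eq, Real.sq_sqrt (by positivity)]

lemma adjoint_toEuclideanLin (M : Matrix (Fin n) (Fin n) ℂ) (x : EuclideanSpace ℂ (Fin n)) :
    (LinearMap.adjoint (Matrix.toEuclideanLin M)) ((Matrix.toEuclideanLin M) x)
      = Matrix.toEuclideanLin (Mᴴ * M) x := by
  rw [← Matrix.toEuclideanLin_conjTranspose_eq_adjoint]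
  simp [Matrix.toEuclideanLin_apply, Matrix.mulVec_mulVec]

lemma eig_toEuclideanLin (A : Matrix (Fin n) (Fin n) ℂ) (i : Fin n) :
    (LinearMap.adjoint (Matrix.toEuclideanLin A))
        ((Matrix.toEuclideanLin A) ((Matrix.isHermitian_conjTranspose_mul_self A).eigenvectorBasis i))
      = (((Matrix.isHermitian_conjTranspose_mul_self A).eigenvalues i : ℝ) : ℂ) •
          (Matrix.isHermitian_conjTranspose_mul_self A).eigenvectorBasis i := by
  rw [adjoint_toEuclideanLin]
  have h := (Matrix.isHermitian_conjTranspose_mul_self A).mulVec_eigenvectorBasis i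
  ext j
  have hj := congrFun h j
  simpa [Matrix.toEuclideanLin_apply, Complex.real_smul] using hj

lemma frob_eq (M : Matrix (Fin n) (Fin n) ℂ) :
    ∑ i, ‖(Matrix.toEuclideanLin M) ((EuclideanSpace.basisFun (Fin n) ℂ) i)‖ ^ 2
      = ∑ j, ∑ k, ‖M j k‖ ^ 2 := by
  rw [Finset.sum_comm]
  refine Finset.sum_congr rfl fun i _ => ?_
  rw [enorm_sq]
  refine Finset.sum_congr rfl fun j _ => ?_
  have hcomp : (Matrix.toEuclideanLin M) ((EuclideanSpace.basisFun (Fin n) ℂ) i) j = M j i := by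
    rw [EuclideanSpace.basisFun_apply, Matrix.toEuclideanLin_apply]
    show (M *ᵥ (WithLp.equiv 2 _) (EuclideanSpace.single i 1)) j = M j i
    simp [Matrix.mulVec, dotProduct, EuclideanSpace.single_apply]
  rw [hcomp]

end MatrixLayer

noncomputable def lam (n : ℕ) : Fin n → ℝ :=
  (Matrix.isHermitian_conjTranspose_mul_self (deltaMat n)).eigenvalues

noncomputable def sv (n : ℕ) (i : Fin n) : ℝ := singVals (deltaMat n) i

section Delta
variable {n : ℕ}

lemma lam_nonneg (i : Fin n) : 0 ≤ lam n i :=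
  Matrix.eigenvalues_conjTranspose_mul_self_nonneg (deltaMat n) i

lemma frobA_le : ∑ j, ∑ k, ‖deltaMat n j k‖ ^ 2 ≤ (n : ℝ) * n := by
  calc ∑ j, ∑ k, ‖deltaMat n j k‖ ^ 2 ≤ ∑ _j : Fin n, ∑ _k : Fin n, (1:ℝ) := by
        refine Finset.sum_le_sum fun j _ => Finset.sum_le_sum fun k _ => ?_
        show ‖(if (j:ℕ) + (k:ℕ) < n then (1:ℂ) else 0)‖ ^ 2 ≤ 1
        split <;> norm_num
    _ = (n : ℝ) * n := by simp [mul_comm]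

lemma lam_le_sq (i : Fin n) : lam n i ≤ (n : ℝ) * n := by
  have h1 := mu_eq_norm_sq ((Matrix.isHermitian_conjTranspose_mul_self (deltaMat n)).eigenvectorBasis)
    (Matrix.toEuclideanLin (deltaMat n)) (lam n) (eig_toEuclideanLin (deltaMat n)) i
  have horth : Orthonormal ℂ (fun _ : Fin 1 =>
      (Matrix.isHermitian_conjTranspose_mul_self (deltaMat n)).eigenvectorBasis i) := by
    constructor
    · intro j
      exact (Matrix.isHermitian_conjTranspose_mul_self (deltaMat n)).eigenvectorBasis.orthonormal.1 i
    · intro a b hab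
      exact absurd (Subsingleton.elim a b) hab
  have h2 := sum_norm_map_le (EuclideanSpace.basisFun (Fin n) ℂ) horth
    (Matrix.toEuclideanLin (deltaMat n))
  rw [frob_eq] at h2
  simp only [Finset.sum_const, Finset.card_univ, Fintype.card_fin, one_smul,
    Fin.sum_univ_one] at h2
  calc lam n i = ‖(Matrix.toEuclideanLin (deltaMat n))
        ((Matrix.isHermitian_conjTranspose_mul_self (deltaMat n)).eigenvectorBasis i)‖ ^ 2 := h1
    _ ≤ ∑ j, ∑ k, ‖deltaMat n j k‖ ^ 2 := h2
    _ ≤ (n : ℝ) * n := frobA_le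

lemma sv_nonneg (i : Fin n) : 0 ≤ sv n i := Real.sqrt_nonneg _

lemma sv_le (i : Fin n) : sv n i ≤ n := by
  have : lam n i ≤ (n:ℝ)^2 := by have := lam_le_sq i; nlinarith
  calc sv n i ≤ Real.sqrt ((n:ℝ)^2) := Real.sqrt_le_sqrt this
    _ = n := Real.sqrt_sq (by positivity)

/-- rank-`n/q+1` approximant -/
def Bq (n q : ℕ) : Matrix (Fin n) (Fin n) ℂ :=
  Matrix.of fun j k => if q * ((j : ℕ) / q) + (k : ℕ) < n then 1 else 0

lemma rank_Bq (q : ℕ) :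
    finrank ℂ (LinearMap.range (Matrix.toEuclideanLin (Bq n q))) ≤ n / q + 1 := by
  classical
  set L := WithLp.linearEquiv 2 ℂ (Fin n → ℂ) with hL
  set χ : ℕ → EuclideanSpace ℂ (Fin n) := fun c =>
    L.symm (fun j : Fin n => if (j : ℕ) / q = c then (1:ℂ) else 0) with hχ
  set s : Finset (EuclideanSpace ℂ (Fin n)) := (Finset.range (n / q + 1)).image χ with hs
  have hle : LinearMap.range (Matrix.toEuclideanLin (Bq n q))
      ≤ Submodule.span ℂ (s : Set (EuclideanSpace ℂ (Fin n))) := by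
    rintro x ⟨v, rfl⟩
    set coef : ℕ → ℂ := fun c =>
      ∑ k : Fin n, (if q * c + (k : ℕ) < n then (1:ℂ) else 0) * (L v) k with hcoef
    have hx : Matrix.toEuclideanLin (Bq n q) v
        = ∑ c ∈ Finset.range (n / q + 1), coef c • χ c := by
      apply L.injective
      rw [_root_.map_sum]
      simp only [_root_.map_smul, hχ, L.apply_symm_apply]
      have hmv : L (Matrix.toEuclideanLin (Bq n q) v) = Bq n q *ᵥ (L v) := rfl
      rw [hmv]
      funext j
      rw [Finset.sum_apply]
      have hj : (j : ℕ) / q ∈ Finset.range (n / q + 1) := by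
        rw [Finset.mem_range, Nat.lt_succ_iff]
        exact Nat.div_le_div_right (le_of_lt j.isLt)
      have hlhs : (Bq n q *ᵥ (L v)) j = coef ((j : ℕ) / q) := by
        show (Bq n q j) ⬝ᵥ (L v) = coef ((j : ℕ) / q)
        rw [dotProduct, hcoef]
        exact Finset.sum_congr rfl fun k _ => by rw [Bq, Matrix.of_apply]
      rw [hlhs]
      simp only [Pi.smul_apply, smul_eq_mul, mul_ite, mul_one, mul_zero]
      rw [Finset.sum_ite_eq (Finset.range (n / q + 1)) ((j : ℕ) / q) coef, if_pos hj]
    rw [hx]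
    exact Submodule.sum_mem _ fun c hc => Submodule.smul_mem _ _
      (Submodule.subset_span (Finset.mem_coe.2 (Finset.mem_image_of_mem χ hc)))
  calc finrank ℂ (LinearMap.range (Matrix.toEuclideanLin (Bq n q)))
      ≤ finrank ℂ (Submodule.span ℂ (s : Set (EuclideanSpace ℂ (Fin n)))) :=
        Submodule.finrank_mono hle
    _ ≤ s.card := finrank_span_finset_le_card s
    _ ≤ n / q + 1 := Finset.card_image_le.trans (by simp)

end Delta

section Delta2
variable {n : ℕ}

lemma row_err_le {q : ℕ} (hq : 0 < q) (j : Fin n) :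
    ∑ k, ‖(deltaMat n - Bq n q) j k‖ ^ 2 ≤ (q : ℝ) := by
  classical
  obtain ⟨e, m, he1, he2, hm⟩ : ∃ e m : ℕ, e + m = (j : ℕ) ∧ e < q ∧ q * ((j : ℕ) / q) = m :=
    ⟨(j : ℕ) % q, q * ((j : ℕ) / q), Nat.mod_add_div _ _, Nat.mod_lt _ hq, rfl⟩
  have hent : ∀ k : Fin n, ‖(deltaMat n - Bq n q) j k‖ ^ 2
      = if (¬((j : ℕ) + (k : ℕ) < n) ∧ m + (k : ℕ) < n) then (1 : ℝ) else 0 := by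
    intro k
    have : (deltaMat n - Bq n q) j k
        = (if (j : ℕ) + (k : ℕ) < n then (1:ℂ) else 0) - (if m + (k : ℕ) < n then 1 else 0) := by
      rw [← hm]
      rfl
    rw [this]
    by_cases h1 : (j : ℕ) + (k : ℕ) < n
    · have h2 : m + (k : ℕ) < n := by omega
      simp [h1, h2]
    · by_cases h2 : m + (k : ℕ) < n
      · simp [h1, h2]
      · simp [h1, h2]
  rw [Finset.sum_congr rfl fun k _ => hent k]
  rw [Finset.sum_ite, Finset.sum_const, Finset.sum_const]
  simp only [nsmul_eq_mul, mul_one, smul_zero, add_zero]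
  have hcard : (Finset.univ.filter fun k : Fin n =>
      ¬((j : ℕ) + (k : ℕ) < n) ∧ m + (k : ℕ) < n).card ≤ q := by
    rw [← Finset.card_range q]
    refine Finset.card_le_card_of_injOn (fun k => (k : ℕ) - (n - (j : ℕ))) ?_ ?_
    · intro k hk
      rw [Finset.mem_coe, Finset.mem_filter] at hk
      rw [Finset.mem_coe, Finset.mem_range]
      show (k : ℕ) - (n - (j : ℕ)) < q
      omega
    · intro k1 hk1 k2 hk2 hk
      rw [Finset.mem_coe, Finset.mem_filter] at hk1 hk2
      simp only at hk
      have : (k1 : ℕ) = (k2 : ℕ) := by omega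
      exact Fin.ext this
  exact_mod_cast hcard

lemma froberr_le {q : ℕ} (hq : 0 < q) :
    ∑ j, ∑ k, ‖(deltaMat n - Bq n q) j k‖ ^ 2 ≤ (n : ℝ) * q := by
  calc ∑ j, ∑ k, ‖(deltaMat n - Bq n q) j k‖ ^ 2 ≤ ∑ _j : Fin n, (q : ℝ) :=
        Finset.sum_le_sum fun j _ => row_err_le hq j
    _ = (n : ℝ) * q := by simp [mul_comm]

lemma count_raw {t : ℝ} (ht : 0 < t) (q : ℕ) (hq : 0 < q) :
    (((Finset.univ.filter fun i : Fin n => t ≤ sv n i).card : ℝ))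
      ≤ ((n / q + 1 : ℕ) : ℝ) + ((n : ℝ) * q) / t ^ 2 := by
  classical
  set b := (Matrix.isHermitian_conjTranspose_mul_self (deltaMat n)).eigenvectorBasis with hb
  set S := Finset.univ.filter fun i : Fin n => t ≤ sv n i with hS
  set W := Submodule.span ℂ (⇑b '' (S : Set (Fin n))) with hW
  have hWrank : finrank ℂ W = S.card := by
    have li : LinearIndependent ℂ (fun i : {x // x ∈ S} => b i) :=
      b.orthonormal.linearIndependent.comp _ Subtype.val_injective
    have h1 := finrank_span_eq_card li
    have h2 : Set.range (fun i : {x // x ∈ S} => b i) = ⇑b '' (S : Set (Fin n)) :=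
      (Set.image_eq_range _ _).symm
    rw [h2] at h1
    rw [hW, h1, Fintype.card_coe]
  have hWlow : ∀ v ∈ W, t * ‖v‖ ≤ ‖Matrix.toEuclideanLin (deltaMat n) v‖ := by
    refine span_lower b _ (lam n) (eig_toEuclideanLin _) S ht.le fun i hi => ?_
    rw [hS, Finset.mem_filter] at hi
    exact (Real.le_sqrt ht.le (lam_nonneg i)).1 hi.2
  have hcount := count_lemma (EuclideanSpace.basisFun (Fin n) ℂ)
    (Matrix.toEuclideanLin (deltaMat n)) (Matrix.toEuclideanLin (Bq n q)) ht W hWlow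
    (n / q + 1) (rank_Bq q)
  rw [hWrank] at hcount
  have hdiff : (Matrix.toEuclideanLin (deltaMat n) - Matrix.toEuclideanLin (Bq n q))
      = Matrix.toEuclideanLin (deltaMat n - Bq n q) := (_root_.map_sub Matrix.toEuclideanLin _ _).symm
  rw [hdiff, frob_eq] at hcount
  exact hcount.trans (add_le_add_right
    ((div_le_div_iff_of_pos_right (by positivity)).2 (froberr_le hq)) _)

lemma count_clean (hn : 0 < n) {t : ℝ} (ht : 0 < t) :
    (((Finset.univ.filter fun i : Fin n => t ≤ sv n i).card : ℝ)) ≤ 4 * n / t := by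
  classical
  by_cases hbig : (n : ℝ) < t
  · have : (Finset.univ.filter fun i : Fin n => t ≤ sv n i) = ∅ := by
      apply Finset.filter_false_of_mem
      intro i _
      push_neg
      exact lt_of_le_of_lt (sv_le i) hbig
    rw [this]
    simp only [Finset.card_empty, Nat.cast_zero]
    positivity
  push_neg at hbig
  by_cases hsmall : t < 1
  · have hcard : ((Finset.univ.filter fun i : Fin n => t ≤ sv n i).card : ℝ) ≤ n := by
      exact_mod_cast (Finset.card_filter_le _ _).trans (by simp)
    have h2 : (n : ℝ) ≤ 4 * n / t := by
      rw [le_div_iff₀ ht]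
      nlinarith [Nat.cast_nonneg (α := ℝ) n]
    linarith
  · push_neg at hsmall
    set q := ⌈t⌉₊ with hqdef
    have hq : 0 < q := Nat.ceil_pos.2 ht
    have htq : t ≤ (q : ℝ) := Nat.le_ceil t
    have hq2 : (q : ℝ) ≤ 2 * t := by
      have := Nat.ceil_lt_add_one ht.le
      linarith
    have hc := count_raw (n := n) ht q hq
    have e1 : ((n / q + 1 : ℕ) : ℝ) ≤ (n : ℝ) / t + (n : ℝ) / t := by
      push_cast
      have i1 : ((n / q : ℕ) : ℝ) ≤ (n : ℝ) / (q : ℝ) := Nat.cast_div_le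
      have i2 : (n : ℝ) / (q : ℝ) ≤ (n : ℝ) / t := by gcongr

      have i3 : (1 : ℝ) ≤ (n : ℝ) / t := by
        rw [le_div_iff₀ ht]
        linarith
      linarith
    have e2 : ((n : ℝ) * q) / t ^ 2 ≤ 2 * n / t := by
      have hn0 : (0:ℝ) ≤ n := Nat.cast_nonneg n
      rw [div_le_div_iff₀ (by positivity) ht]
      have h5 : (n:ℝ) * (q:ℝ) ≤ (n:ℝ) * (2*t) := mul_le_mul_of_nonneg_left hq2 hn0
      nlinarith [ht.le]
    calc ((Finset.univ.filter fun i : Fin n => t ≤ sv n i).card : ℝ)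
        ≤ ((n / q + 1 : ℕ) : ℝ) + ((n : ℝ) * q) / t ^ 2 := hc
      _ ≤ ((n : ℝ) / t + (n : ℝ) / t) + 2 * n / t := by linarith
      _ = 4 * n / t := by ring

end Delta2

noncomputable def tkk (n k : ℕ) : ℝ := (n : ℝ) * (2 : ℝ) ^ (-(1 + (k : ℝ)))

section Final
variable {n : ℕ} {p : ℝ}

lemma tkk_pos (hn : 0 < n) (k : ℕ) : 0 < tkk n k := by
  have h : (0:ℝ) < n := by exact_mod_cast hn
  unfold tkk
  positivity

lemma ptwise (hn : 0 < n) (hp : 1 < p) (x : ℝ) (hx0 : 0 ≤ x) (hxn : x ≤ n) :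
    x ^ p ≤ ((n : ℝ) * (2 : ℝ) ^ (-(n : ℝ))) ^ p
      + ∑ k ∈ Finset.range n, (if tkk n k < x then (2 * tkk n k) ^ p else 0) := by
  classical
  set T := (n : ℝ) * (2 : ℝ) ^ (-(n : ℝ)) with hTdef
  have hnR : (0:ℝ) < n := by exact_mod_cast hn
  have hT : 0 < T := by rw [hTdef]; positivity
  have hsumnn : 0 ≤ ∑ k ∈ Finset.range n, (if tkk n k < x then (2 * tkk n k) ^ p else 0) := by
    refine Finset.sum_nonneg fun k _ => ?_
    have := (tkk_pos hn k).le
    split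
    · positivity
    · exact le_refl 0
  by_cases hsm : x ≤ T
  · have h1 : x ^ p ≤ T ^ p := Real.rpow_le_rpow hx0 hsm (by linarith)
    linarith
  · push_neg at hsm
    have hPex : ∃ k, tkk n k < x := by
      refine ⟨n - 1, ?_⟩
      have hcast : (1 : ℝ) + ((n - 1 : ℕ) : ℝ) = (n : ℝ) := by
        have : ((n - 1 : ℕ) : ℝ) = (n : ℝ) - 1 := by
          push_cast [Nat.cast_sub hn]
          ring
        rw [this]; ring
      have : tkk n (n - 1) = T := by
        rw [tkk, hTdef, hcast]
      rw [this]; exact hsm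
    set k0 := Nat.find hPex with hk0def
    have hk0 : tkk n k0 < x := Nat.find_spec hPex
    have hk0n : k0 ≤ n - 1 := Nat.find_min' hPex (by
      have hcast : (1 : ℝ) + ((n - 1 : ℕ) : ℝ) = (n : ℝ) := by
        have : ((n - 1 : ℕ) : ℝ) = (n : ℝ) - 1 := by
          push_cast [Nat.cast_sub hn]
          ring
        rw [this]; ring
      show tkk n (n-1) < x
      rw [tkk, hcast]; exact hsm)
    have hk0r : k0 ∈ Finset.range n := Finset.mem_range.2 (by omega)
    have hx2 : x ≤ 2 * tkk n k0 := by
      rcases Nat.eq_zero_or_pos k0 with h0 | h0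
      · have : 2 * tkk n k0 = n := by
          rw [h0, tkk]
          rw [show (-(1 + ((0:ℕ) : ℝ))) = (-1 : ℝ) by norm_num, Real.rpow_neg_one]
          ring
        rw [this]; exact hxn
      · have hnot := Nat.find_min hPex (show k0 - 1 < k0 by omega)
        push_neg at hnot
        have heq : tkk n (k0 - 1) = 2 * tkk n k0 := by
          rw [tkk, tkk]
          have hc : (-(1 + ((k0 - 1 : ℕ) : ℝ))) = -(1 + (k0 : ℝ)) + 1 := by
            have : ((k0 - 1 : ℕ) : ℝ) = (k0 : ℝ) - 1 := by
              push_cast [Nat.cast_sub h0]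
              ring
            rw [this]; ring
          rw [hc, Real.rpow_add two_pos, Real.rpow_one]
          ring
        rw [heq] at hnot
        exact hnot
    have hterm : x ^ p ≤ (2 * tkk n k0) ^ p := Real.rpow_le_rpow hx0 hx2 (by linarith)
    have hsum : (if tkk n k0 < x then (2 * tkk n k0) ^ p else 0)
        ≤ ∑ k ∈ Finset.range n, (if tkk n k < x then (2 * tkk n k) ^ p else 0) := by
      refine Finset.single_le_sum
        (f := fun k => if tkk n k < x then (2 * tkk n k) ^ p else 0) (fun k _ => ?_) hk0r
      have := (tkk_pos hn k).le
      show (0:ℝ) ≤ if tkk n k < x then (2 * tkk n k) ^ p else 0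
      split
      · exact Real.rpow_nonneg (by linarith) p
      · exact le_refl 0
    rw [if_pos hk0] at hsum
    have hTp : 0 ≤ T ^ p := by positivity
    linarith

lemma term_algebra (hn : 0 < n) (hp : 1 < p) (k : ℕ) :
    (2 * tkk n k) ^ p * (4 * (n:ℝ) / tkk n k)
      = 4 * (2:ℝ) ^ p * (n:ℝ) ^ p * ((2:ℝ) ^ (1 - p)) ^ (k + 1) := by
  have hnR : (0:ℝ) < n := by exact_mod_cast hn
  set w : ℝ := (2 : ℝ) ^ (-(1 + (k : ℝ))) with hw
  have hwpos : 0 < w := by rw [hw]; positivity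
  have htk : tkk n k = (n:ℝ) * w := rfl
  have h1 : (2 * tkk n k) ^ p = (2:ℝ) ^ p * ((n:ℝ) ^ p * w ^ p) := by
    rw [htk, ← mul_assoc, Real.mul_rpow (by positivity) hwpos.le,
      Real.mul_rpow (by norm_num) hnR.le]
    ring
  have h2 : 4 * (n:ℝ) / tkk n k = 4 / w := by
    rw [htk]
    field_simp
  rw [h1, h2]
  have h3 : w ^ p / w = w ^ (p - 1) := by
    rw [Real.rpow_sub hwpos, Real.rpow_one]
  have h4 : w ^ (p - 1) = ((2:ℝ) ^ (1 - p)) ^ (k + 1) := by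
    rw [hw, ← Real.rpow_natCast ((2:ℝ) ^ (1 - p)) (k + 1), ← Real.rpow_mul (by norm_num),
      ← Real.rpow_mul (by norm_num)]
    congr 1
    push_cast
    ring
  field_simp
  rw [← h4, ← h3]
  field_simp

lemma sum_sv_le (hn : 0 < n) (hp : 1 < p) :
    ∑ i, sv n i ^ p ≤ (1 + 4 * (2:ℝ) ^ p / (1 - (2:ℝ) ^ (1 - p))) * (n:ℝ) ^ p := by
  classical
  have hnR : (0:ℝ) < n := by exact_mod_cast hn
  set r : ℝ := (2:ℝ) ^ (1 - p) with hr
  have hr0 : 0 < r := by rw [hr]; positivity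
  have hr1 : r < 1 := by
    rw [hr]
    exact Real.rpow_lt_one_of_one_lt_of_neg one_lt_two (by linarith)
  set T : ℝ := (n : ℝ) * (2 : ℝ) ^ (-(n : ℝ)) with hT
  have step1 : ∑ i, sv n i ^ p
      ≤ (n:ℝ) * T ^ p
        + ∑ k ∈ Finset.range n, ∑ i : Fin n,
            (if tkk n k < sv n i then (2 * tkk n k) ^ p else 0) := by
    have h1 : ∑ i, sv n i ^ p
        ≤ ∑ i : Fin n, (T ^ p + ∑ k ∈ Finset.range n,
            (if tkk n k < sv n i then (2 * tkk n k) ^ p else 0)) :=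
      Finset.sum_le_sum fun i _ => ptwise hn hp (sv n i) (sv_nonneg i) (sv_le i)
    rw [Finset.sum_add_distrib, Finset.sum_const, Finset.card_univ, Fintype.card_fin,
      nsmul_eq_mul, Finset.sum_comm] at h1
    exact h1
  have lead : (n:ℝ) * T ^ p ≤ (n:ℝ) ^ p := by
    have hTp : T ^ p = (n:ℝ) ^ p * ((2:ℝ) ^ (-(n:ℝ))) ^ p := by
      rw [hT, Real.mul_rpow hnR.le (by positivity)]
    have h2n : (n:ℝ) ≤ (2:ℝ) ^ (n:ℝ) := by
      rw [show ((n:ℝ)) = ((n:ℕ):ℝ) from rfl, Real.rpow_natCast]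
      exact_mod_cast (Nat.lt_two_pow_self (n := n)).le
    have hmono : (2:ℝ) ^ (n:ℝ) ≤ (2:ℝ) ^ ((n:ℝ) * p) := by
      apply Real.rpow_le_rpow_of_exponent_le one_le_two
      nlinarith
    have hz : ((2:ℝ) ^ (-(n:ℝ))) ^ p = ((2:ℝ) ^ ((n:ℝ) * p))⁻¹ := by
      rw [← Real.rpow_mul (by norm_num : (0:ℝ) ≤ 2), show (-(n:ℝ)) * p = -((n:ℝ)*p) by ring,
        Real.rpow_neg (by norm_num : (0:ℝ) ≤ 2)]
    have hsmall : (n:ℝ) * ((2:ℝ) ^ ((n:ℝ) * p))⁻¹ ≤ 1 := by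
      rw [← div_eq_mul_inv, div_le_one (by positivity)]
      linarith
    calc (n:ℝ) * T ^ p = (n:ℝ) ^ p * ((n:ℝ) * ((2:ℝ) ^ ((n:ℝ)*p))⁻¹) := by
          rw [hTp, hz]; ring
      _ ≤ (n:ℝ) ^ p * 1 := by
          apply mul_le_mul_of_nonneg_left hsmall (by positivity)
      _ = (n:ℝ) ^ p := by ring
  have perk : ∀ k ∈ Finset.range n, ∑ i : Fin n,
      (if tkk n k < sv n i then (2 * tkk n k) ^ p else 0)
        ≤ 4 * (2:ℝ) ^ p * (n:ℝ) ^ p * r ^ (k + 1) := by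
    intro k _
    have htk := tkk_pos hn k
    have hsum_eq : ∑ i : Fin n, (if tkk n k < sv n i then (2 * tkk n k) ^ p else 0)
        = ((Finset.univ.filter fun i : Fin n => tkk n k < sv n i).card : ℝ)
            * (2 * tkk n k) ^ p := by
      rw [Finset.sum_ite, Finset.sum_const, Finset.sum_const]
      simp [nsmul_eq_mul]
    have hcard1 : ((Finset.univ.filter fun i : Fin n => tkk n k < sv n i).card : ℝ)
        ≤ ((Finset.univ.filter fun i : Fin n => tkk n k ≤ sv n i).card : ℝ) := by
      have hsub : (Finset.univ.filter fun i : Fin n => tkk n k < sv n i)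
          ⊆ (Finset.univ.filter fun i : Fin n => tkk n k ≤ sv n i) := by
        intro i hi
        rw [Finset.mem_filter] at hi ⊢
        exact ⟨hi.1, hi.2.le⟩
      exact_mod_cast Finset.card_le_card hsub
    have hcard2 := count_clean (n := n) hn htk
    have hpow : (0:ℝ) ≤ (2 * tkk n k) ^ p := Real.rpow_nonneg (by linarith) p
    calc ∑ i : Fin n, (if tkk n k < sv n i then (2 * tkk n k) ^ p else 0)
        = ((Finset.univ.filter fun i : Fin n => tkk n k < sv n i).card : ℝ)
            * (2 * tkk n k) ^ p := hsum_eq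
      _ ≤ (4 * (n:ℝ) / tkk n k) * (2 * tkk n k) ^ p :=
          mul_le_mul_of_nonneg_right (hcard1.trans hcard2) hpow
      _ = (2 * tkk n k) ^ p * (4 * (n:ℝ) / tkk n k) := by ring
      _ = 4 * (2:ℝ) ^ p * (n:ℝ) ^ p * r ^ (k + 1) := term_algebra hn hp k
  have geo : ∑ k ∈ Finset.range n, r ^ (k + 1) ≤ 1 / (1 - r) := by
    have h6 : ∑ k ∈ Finset.range n, r ^ k ≤ 1 / (1 - r) := by
      rw [geom_sum_eq hr1.ne n]
      have heq : (r ^ n - 1) / (r - 1) = (1 - r ^ n) / (1 - r) := by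
        rw [← neg_sub 1 (r ^ n), ← neg_sub 1 r, neg_div_neg_eq]
      rw [heq]
      gcongr
      · linarith [pow_nonneg hr0.le n]
    have h7 : ∑ k ∈ Finset.range n, r ^ (k + 1) = r * ∑ k ∈ Finset.range n, r ^ k := by
      rw [Finset.mul_sum]
      exact Finset.sum_congr rfl fun k _ => by rw [pow_succ]; ring
    have h8 : (0:ℝ) ≤ ∑ k ∈ Finset.range n, r ^ k :=
      Finset.sum_nonneg fun k _ => pow_nonneg hr0.le k
    calc ∑ k ∈ Finset.range n, r ^ (k + 1) = r * ∑ k ∈ Finset.range n, r ^ k := h7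
      _ ≤ 1 * (1 / (1 - r)) := by
          apply mul_le_mul hr1.le h6 h8 (by norm_num)
      _ = 1 / (1 - r) := by ring
  have tail : ∑ k ∈ Finset.range n, ∑ i : Fin n,
      (if tkk n k < sv n i then (2 * tkk n k) ^ p else 0)
        ≤ 4 * (2:ℝ) ^ p * (n:ℝ) ^ p * (1 / (1 - r)) := by
    calc ∑ k ∈ Finset.range n, ∑ i : Fin n,
        (if tkk n k < sv n i then (2 * tkk n k) ^ p else 0)
        ≤ ∑ k ∈ Finset.range n, 4 * (2:ℝ) ^ p * (n:ℝ) ^ p * r ^ (k + 1) :=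
          Finset.sum_le_sum perk
      _ = 4 * (2:ℝ) ^ p * (n:ℝ) ^ p * ∑ k ∈ Finset.range n, r ^ (k + 1) := by
          rw [Finset.mul_sum]
      _ ≤ 4 * (2:ℝ) ^ p * (n:ℝ) ^ p * (1 / (1 - r)) := by
          apply mul_le_mul_of_nonneg_left geo (by positivity)
  have hfin : (n:ℝ) ^ p + 4 * (2:ℝ) ^ p * (n:ℝ) ^ p * (1 / (1 - r))
      = (1 + 4 * (2:ℝ) ^ p / (1 - r)) * (n:ℝ) ^ p := by
    field_simp
  linarith [step1, lead, tail, hfin.le, hfin.ge]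

lemma cube_le (m : ℕ) : (m:ℝ) ^ 3 / 3 ≤ ∑ j ∈ Finset.range m, ((j:ℝ) + 1) ^ 2 := by
  induction m with
  | zero => simp
  | succ m ih =>
    rw [Finset.sum_range_succ]
    push_cast
    have hm0 : (0:ℝ) ≤ m := Nat.cast_nonneg m
    nlinarith [ih, hm0]

lemma card_filter_val_lt {m : ℕ} (hm : m ≤ n) :
    ((Finset.univ : Finset (Fin n)).filter fun k : Fin n => (k : ℕ) < m).card = m := by
  have : ((Finset.univ : Finset (Fin n)).filter fun k : Fin n => (k : ℕ) < m)
      = Finset.map (Fin.castLEEmb hm) Finset.univ := by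
    ext k
    simp only [Finset.mem_filter, Finset.mem_univ, true_and, Finset.mem_map,
      Fin.castLEEmb_apply]
    constructor
    · intro hk
      exact ⟨⟨(k:ℕ), hk⟩, by ext; simp⟩
    · rintro ⟨a, rfl⟩
      simpa using a.isLt
  rw [this, Finset.card_map, Finset.card_univ, Fintype.card_fin]

lemma exists_sv_big (hn : 0 < n) : ∃ i : Fin n, (n:ℝ) / 2 ≤ sv n i := by
  classical
  haveI : Nonempty (Fin n) := Fin.pos_iff_nonempty.1 hn
  have hnR : (0:ℝ) < n := by exact_mod_cast hn
  set b := (Matrix.isHermitian_conjTranspose_mul_self (deltaMat n)).eigenvectorBasis with hb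
  set v : EuclideanSpace ℂ (Fin n) := (WithLp.equiv 2 (Fin n → ℂ)).symm (fun _ => 1) with hv
  obtain ⟨i, hi⟩ := exists_big b (Matrix.toEuclideanLin (deltaMat n)) (lam n)
    (eig_toEuclideanLin (deltaMat n)) v
  have hnv : ‖v‖ ^ 2 = (n:ℝ) := by
    rw [enorm_sq]
    have : ∀ j : Fin n, ‖v j‖ ^ 2 = 1 := by
      intro j
      show ‖(1:ℂ)‖ ^ 2 = 1
      simp
    rw [Finset.sum_congr rfl fun j _ => this j]
    simp
  have hAv : ∀ j : Fin n, (Matrix.toEuclideanLin (deltaMat n) v) j = ((n - (j:ℕ) : ℕ) : ℂ) := by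
    intro j
    show ((deltaMat n) *ᵥ (fun _ => (1:ℂ))) j = ((n - (j:ℕ) : ℕ) : ℂ)
    show (∑ k, deltaMat n j k * 1) = ((n - (j:ℕ) : ℕ) : ℂ)
    have h1 : ∀ k : Fin n, deltaMat n j k * 1 = if (k:ℕ) < n - (j:ℕ) then (1:ℂ) else 0 := by
      intro k
      show (if (j:ℕ) + (k:ℕ) < n then (1:ℂ) else 0) * 1 = _
      rw [mul_one]
      by_cases h : (j:ℕ) + (k:ℕ) < n
      · rw [if_pos h, if_pos (by omega)]
      · rw [if_neg h, if_neg (by omega)]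
    rw [Finset.sum_congr rfl fun k _ => h1 k, Finset.sum_ite, Finset.sum_const,
      Finset.sum_const]
    simp only [smul_zero, add_zero, nsmul_eq_mul, mul_one]
    rw [card_filter_val_lt (by omega)]
  have hfv : ((n:ℝ)^3) / 3 ≤ ‖Matrix.toEuclideanLin (deltaMat n) v‖ ^ 2 := by
    rw [enorm_sq]
    have h2 : ∀ j : Fin n, ‖(Matrix.toEuclideanLin (deltaMat n) v) j‖ ^ 2
        = (((n - (j:ℕ) : ℕ) : ℝ)) ^ 2 := by
      intro j
      rw [hAv j]
      rw [Complex.norm_natCast]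
    rw [Finset.sum_congr rfl fun j _ => h2 j]
    have h3 : ∑ j : Fin n, (((n - (j:ℕ) : ℕ) : ℝ)) ^ 2
        = ∑ j ∈ Finset.range n, (((n - j : ℕ) : ℝ)) ^ 2 :=
      Fin.sum_univ_eq_sum_range (fun m => (((n - m : ℕ) : ℝ)) ^ 2) n
    rw [h3]
    have h4 : ∑ j ∈ Finset.range n, (((n - j : ℕ) : ℝ)) ^ 2
        = ∑ j ∈ Finset.range n, ((j:ℝ) + 1) ^ 2 := by
      rw [← Finset.sum_range_reflect]
      refine Finset.sum_congr rfl fun j hj => ?_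
      rw [Finset.mem_range] at hj
      congr 1
      have : n - (n - 1 - j) = j + 1 := by omega
      rw [this]
      push_cast
      ring
    rw [h4]
    exact cube_le n
  have hlam : (n:ℝ)^2 / 3 ≤ lam n i := by
    rw [hnv] at hi
    have h5 : ((n:ℝ)^3) / 3 ≤ lam n i * n := le_trans hfv hi
    have h6 : (n:ℝ)^2 / 3 * n ≤ lam n i * n := by nlinarith [h5]
    exact le_of_mul_le_mul_right h6 hnR
  refine ⟨i, ?_⟩
  rw [show sv n i = Real.sqrt (lam n i) from rfl]
  rw [Real.le_sqrt (by positivity) (lam_nonneg i)]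
  nlinarith [hlam]

end Final


/-- For `1 < p < ∞` there are positive constants `c, C` (depending
only on `p`) such that for every positive integer `n`,
`c · n ≤ ‖Δ_n‖_{S_p} ≤ C · n`. -/
theorem deltaMat_schatten_asymptotics_p_gt_one (p : ℝ) (hp : 1 < p) :
    ∃ c C : ℝ, 0 < c ∧ 0 < C ∧ ∀ n : ℕ, 0 < n →
      c * (n : ℝ) ≤ schattenNorm p (deltaMat n) ∧
      schattenNorm p (deltaMat n) ≤ C * (n : ℝ) := by
  have hp0 : 0 < p := by linarith
  have hr1 : (2:ℝ) ^ (1 - p) < 1 :=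
    Real.rpow_lt_one_of_one_lt_of_neg one_lt_two (by linarith)
  have hr0 : (0:ℝ) < (2:ℝ) ^ (1 - p) := Real.rpow_pos_of_pos two_pos _
  have hCppos : 0 < 1 + 4 * (2:ℝ) ^ p / (1 - (2:ℝ) ^ (1 - p)) := by
    have h : 0 < 4 * (2:ℝ) ^ p / (1 - (2:ℝ) ^ (1 - p)) := by
      apply div_pos
      · positivity
      · linarith
    linarith
  refine ⟨1/2, (1 + 4 * (2:ℝ) ^ p / (1 - (2:ℝ) ^ (1 - p))) ^ (1/p), by norm_num,
    Real.rpow_pos_of_pos hCppos _, fun n hn => ?_⟩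
  have hnR : (0:ℝ) < n := by exact_mod_cast hn
  have hsch : schattenNorm p (deltaMat n) = (∑ i, sv n i ^ p) ^ (1/p) := rfl
  rw [hsch]
  constructor
  · obtain ⟨i0, hi0⟩ := exists_sv_big (n := n) hn
    have h1 : ((n:ℝ)/2) ^ p ≤ ∑ i, sv n i ^ p := by
      refine le_trans (Real.rpow_le_rpow (by positivity) hi0 hp0.le) ?_
      exact Finset.single_le_sum (f := fun i => sv n i ^ p)
        (fun i _ => Real.rpow_nonneg (sv_nonneg i) p) (Finset.mem_univ i0)
    have h2 := Real.rpow_le_rpow (by positivity) h1 (by positivity : (0:ℝ) ≤ 1/p)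
    rw [← Real.rpow_mul (by positivity : (0:ℝ) ≤ (n:ℝ)/2), mul_one_div_cancel hp0.ne',
      Real.rpow_one] at h2
    calc (1/2) * (n:ℝ) = (n:ℝ)/2 := by ring
      _ ≤ (∑ i, sv n i ^ p) ^ (1/p) := h2
  · have h1 := sum_sv_le (n := n) hn hp
    have hsnn : 0 ≤ ∑ i, sv n i ^ p :=
      Finset.sum_nonneg fun i _ => Real.rpow_nonneg (sv_nonneg i) p
    have h2 := Real.rpow_le_rpow hsnn h1 (by positivity : (0:ℝ) ≤ 1/p)
    rw [Real.mul_rpow hCppos.le (by positivity : (0:ℝ) ≤ (n:ℝ) ^ p),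
      ← Real.rpow_mul hnR.le, mul_one_div_cancel hp0.ne', Real.rpow_one] at h2
    exact h2
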